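/- arXiv:1804.02823 — 2 statements merged into one kernel-verified Lean document; each statement's English description precedes it below -/
import Mathlib

section
/- Let {Y_n}_{n≥1} and {X_{n,k}}_{n,k≥1} be real-valued random variables defined on a common probability space, all with mean zero and finite variance. Assume: (i) for each k there is σ_k² ≥ 0 such that, as n → ∞, X_{n,k} converges in distribution to N(0, σ_k²) and Var[X_{n,k}] → σ_k²; (ii) lim_{k→∞} limsup_{n→∞} Var[X_{n,k} − Y_n] = 0. Then the limit σ² := lim_{k→∞} σ_k² exists (and is finite), and Var[Y_n] → σ² as n → ∞. -/
open MeasureTheory Filter ProbabilityTheory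

lemma sd_eq {Ω : Type} [MeasurableSpace Ω] (P : Measure Ω) [IsProbabilityMeasure P]
    (f : Ω → ℝ) (hm : ∫ ω, f ω ∂P = 0) :
    Real.sqrt (variance f P) = (eLpNorm f 2 P).toReal := by
  have hev : evariance f P = (eLpNorm f 2 P) ^ 2 := by
    rw [evariance, eLpNorm_eq_lintegral_rpow_enorm_toReal two_ne_zero ENNReal.ofNat_ne_top, hm]
    simp only [sub_zero, ENNReal.toReal_ofNat, one_div]
    rw [← ENNReal.rpow_natCast _ 2, ← ENNReal.rpow_mul]
    norm_num
  rw [variance, hev, ENNReal.toReal_pow, Real.sqrt_sq ENNReal.toReal_nonneg]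

lemma sd_triangle {Ω : Type} [MeasurableSpace Ω] (P : Measure Ω) [IsProbabilityMeasure P]
    (f g : Ω → ℝ) (hf : MemLp f 2 P) (hg : MemLp g 2 P)
    (hfm : ∫ ω, f ω ∂P = 0) (hgm : ∫ ω, g ω ∂P = 0) :
    Real.sqrt (variance f P) ≤
      Real.sqrt (variance (fun ω => f ω - g ω) P) + Real.sqrt (variance g P) := by
  have hsub : MemLp (fun ω => f ω - g ω) 2 P := hf.sub hg
  have hsubm : ∫ ω, (f ω - g ω) ∂P = 0 := by
    rw [integral_sub (hf.integrable one_le_two) (hg.integrable one_le_two), hfm, hgm]; ring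
  rw [sd_eq P f hfm, sd_eq P g hgm, sd_eq P _ hsubm]
  have h : eLpNorm f 2 P ≤ eLpNorm (fun ω => f ω - g ω) 2 P + eLpNorm g 2 P := by
    have := eLpNorm_add_le (hsub.aestronglyMeasurable) (hg.aestronglyMeasurable) one_le_two
    have heq : ((fun ω => f ω - g ω) + g) = f := by ext ω; simp
    rwa [heq] at this
  calc (eLpNorm f 2 P).toReal ≤ (eLpNorm (fun ω => f ω - g ω) 2 P + eLpNorm g 2 P).toReal := by
        apply ENNReal.toReal_mono _ h
        exact ENNReal.add_ne_top.2 ⟨hsub.eLpNorm_ne_top, hg.eLpNorm_ne_top⟩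
    _ = _ := ENNReal.toReal_add hsub.eLpNorm_ne_top hg.eLpNorm_ne_top

/-- Lemma 2.2 of the paper (convergence of variances part): if for each `k`,
`X n k` converges in distribution to `N(0, σk²)` with convergence of variances,
and `lim_k limsup_n Var[X n k - Y n] = 0`, then `σ² = lim_k σk²` exists and
`Var[Y n] → σ²`. -/
theorem stmt_1
    (Ω : Type) [MeasurableSpace Ω] (P : Measure Ω) [IsProbabilityMeasure P]
    (Y : ℕ → Ω → ℝ) (X : ℕ → ℕ → Ω → ℝ)
    (hYmeas : ∀ n, Measurable (Y n)) (hXmeas : ∀ n k, Measurable (X n k))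
    (hYL2 : ∀ n, MemLp (Y n) 2 P) (hXL2 : ∀ n k, MemLp (X n k) 2 P)
    (hYmean : ∀ n, ∫ ω, Y n ω ∂P = 0) (hXmean : ∀ n k, ∫ ω, X n k ω ∂P = 0)
    (σk2 : ℕ → ℝ) (hσk2 : ∀ k, 0 ≤ σk2 k)
    (hdist : ∀ k, ∀ g : BoundedContinuousFunction ℝ ℝ,
      Tendsto (fun n : ℕ => ∫ ω, g (X n k ω) ∂P) atTop
        (nhds (∫ x, g x ∂(gaussianReal 0 ⟨σk2 k, hσk2 k⟩))))
    (hvar : ∀ k, Tendsto (fun n : ℕ => variance (X n k) P) atTop (nhds (σk2 k)))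
    (happrox : ∀ ε : ℝ, 0 < ε → ∃ K : ℕ, ∀ k ≥ K,
      ∀ᶠ n in atTop, variance (fun ω => X n k ω - Y n ω) P ≤ ε) :
    ∃ σ2 : ℝ, 0 ≤ σ2 ∧ Tendsto σk2 atTop (nhds σ2) ∧
      Tendsto (fun n : ℕ => variance (Y n) P) atTop (nhds σ2) := by
  set a : ℕ → ℕ → ℝ := fun k n => Real.sqrt (variance (X n k) P) with ha
  set b : ℕ → ℝ := fun n => Real.sqrt (variance (Y n) P) with hb
  set d : ℕ → ℕ → ℝ := fun k n => Real.sqrt (variance (fun ω => X n k ω - Y n ω) P) with hd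
  set s : ℕ → ℝ := fun k => Real.sqrt (σk2 k) with hs
  -- a k n → s k
  have ha_tendsto : ∀ k, Tendsto (fun n => a k n) atTop (nhds (s k)) :=
    fun k => (hvar k).sqrt
  -- key triangle inequalities
  have htri : ∀ k n, |a k n - b n| ≤ d k n := by
    intro k n
    rw [abs_sub_le_iff]
    constructor
    · have := sd_triangle P (X n k) (Y n) (hXL2 n k) (hYL2 n) (hXmean n k) (hYmean n)
      simpa [ha, hb, hd] using by linarith [this]
    · have := sd_triangle P (Y n) (X n k) (hYL2 n) (hXL2 n k) (hYmean n) (hXmean n k)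
      have hvs : variance (fun ω => Y n ω - X n k ω) P
          = variance (fun ω => X n k ω - Y n ω) P := by
        have : (fun ω => Y n ω - X n k ω) = fun ω => (-1 : ℝ) * (X n k ω - Y n ω) := by
          ext ω; ring
        rw [this, variance_const_mul]; ring
      rw [hvs] at this
      simpa [ha, hb, hd] using by linarith [this]
  -- approximation in sd form
  have happrox' : ∀ ε : ℝ, 0 < ε → ∃ K : ℕ, ∀ k ≥ K, ∀ᶠ n in atTop, d k n ≤ ε := by
    intro ε hε
    obtain ⟨K, hK⟩ := happrox (ε ^ 2) (by positivity)
    refine ⟨K, fun k hk => ?_⟩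
    filter_upwards [hK k hk] with n hn
    calc d k n ≤ Real.sqrt (ε ^ 2) := Real.sqrt_le_sqrt hn
      _ = ε := by rw [Real.sqrt_sq hε.le]
  -- s is Cauchy
  have hcauchy : CauchySeq s := by
    rw [Metric.cauchySeq_iff]
    intro ε hε
    obtain ⟨K, hK⟩ := happrox' (ε / 4) (by linarith)
    refine ⟨K, fun k hk k' hk' => ?_⟩
    have hlim : Tendsto (fun n => |a k n - a k' n|) atTop (nhds |s k - s k'|) :=
      ((ha_tendsto k).sub (ha_tendsto k')).abs
    have hbound : ∀ᶠ n in atTop, |a k n - a k' n| ≤ ε / 2 := by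
      filter_upwards [hK k hk, hK k' hk'] with n h1 h2
      have t1 := htri k n
      have t2 := htri k' n
      have : |a k n - a k' n| ≤ |a k n - b n| + |a k' n - b n| := abs_sub_le_iff.2
        ⟨by have := abs_sub_abs_le_abs_sub (a k n - b n) (a k' n - b n)
            have h1' := abs_le.1 (le_refl |a k n - b n|) ; linarith [abs_le.1 (le_refl |a k n - b n|), neg_abs_le (a k n - b n), le_abs_self (a k n - b n), neg_abs_le (a k' n - b n), le_abs_self (a k' n - b n)],
         by linarith [neg_abs_le (a k n - b n), le_abs_self (a k n - b n), neg_abs_le (a k' n - b n), le_abs_self (a k' n - b n)]⟩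
      linarith
    have : |s k - s k'| ≤ ε / 2 := le_of_tendsto hlim hbound
    rw [Real.dist_eq]
    linarith
  obtain ⟨L, hL⟩ := cauchySeq_tendsto_of_complete hcauchy
  have hLnonneg : 0 ≤ L := ge_of_tendsto hL (Eventually.of_forall fun k => Real.sqrt_nonneg _)
  refine ⟨L ^ 2, by positivity, ?_, ?_⟩
  · have : σk2 = fun k => (s k) ^ 2 := by
      ext k; rw [hs]; simp [Real.sq_sqrt (hσk2 k)]
    rw [this]
    exact hL.pow 2
  · -- b n → L
    have hbL : Tendsto b atTop (nhds L) := by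
      rw [Metric.tendsto_atTop]
      intro ε hε
      obtain ⟨K, hK⟩ := happrox' (ε / 4) (by linarith)
      obtain ⟨k, hkK, hks⟩ : ∃ k, K ≤ k ∧ |s k - L| ≤ ε / 4 := by
        have := (Metric.tendsto_atTop.1 hL) (ε / 4) (by linarith)
        obtain ⟨K', hK'⟩ := this
        exact ⟨max K K', le_max_left _ _, by
          have := hK' (max K K') (le_max_right _ _)
          rw [Real.dist_eq] at this; linarith⟩
      have hev : ∀ᶠ n in atTop, |b n - L| ≤ 3 * ε / 4 := by
        have hak := Metric.tendsto_atTop.1 (ha_tendsto k) (ε / 4) (by linarith)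
        obtain ⟨N, hN⟩ := hak
        filter_upwards [hK k hkK, eventually_ge_atTop N] with n h1 h2
        have h3 := hN n h2
        rw [Real.dist_eq] at h3
        have t := htri k n
        have : |b n - L| ≤ |b n - a k n| + |a k n - s k| + |s k - L| := by
          have := abs_sub_le (b n) (a k n) L
          have := abs_sub_le (a k n) (s k) L
          calc |b n - L| ≤ |b n - a k n| + |a k n - L| := abs_sub_le _ _ _
            _ ≤ |b n - a k n| + (|a k n - s k| + |s k - L|) := by
                linarith [abs_sub_le (a k n) (s k) L]
            _ = _ := by ring
        have habs : |b n - a k n| = |a k n - b n| := abs_sub_comm _ _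
        rw [habs] at this
        linarith
      obtain ⟨N, hN⟩ := (eventually_atTop).1 hev
      exact ⟨N, fun n hn => by rw [Real.dist_eq]; have := hN n hn; linarith⟩
    have : (fun n : ℕ => variance (Y n) P) = fun n => (b n) ^ 2 := by
      ext n; rw [hb]; simp [Real.sq_sqrt (variance_nonneg (Y n) P)]
    rw [this]
    exact hbL.pow 2
end

section
/- Let {Y_n}_{n≥1} and {X_{n,k}}_{n,k≥1} be real-valued random variables defined on a common probability space, all with mean zero and finite variance. Assume: (i) for each k there is σ_k² ≥ 0 such that, as n → ∞, X_{n,k} converges in distribution to N(0, σ_k²) and Var[X_{n,k}] → σ_k²; (ii) lim_{k→∞} limsup_{n→∞} Var[X_{n,k} − Y_n] = 0. Then the limit σ² := lim_{k→∞} σ_k² exists, and Y_n converges in distribution to N(0, σ²) as n → ∞. -/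
open MeasureTheory Filter ProbabilityTheory

section Aux
open Metric
open scoped ENNReal NNReal

variable {Ω : Type} [MeasurableSpace Ω] {P : Measure Ω} [IsProbabilityMeasure P]

lemma aux_var_eq_sq {f : Ω → ℝ} (hf : MemLp f 2 P) (hmean : ∫ ω, f ω ∂P = 0) :
    variance f P = ((eLpNorm f 2 P).toReal)^2 := by
  have hev : evariance f P = ∫⁻ ω, (‖f ω‖₊ : ℝ≥0∞)^2 ∂P := by
    rw [evariance]
    simp [hmean, enorm_eq_nnnorm]
  have hlp : eLpNorm f 2 P = (∫⁻ ω, (‖f ω‖₊ : ℝ≥0∞)^2 ∂P) ^ (1/2 : ℝ) := by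
    rw [eLpNorm_eq_lintegral_rpow_enorm_toReal two_ne_zero ENNReal.ofNat_ne_top]
    norm_num [ENNReal.rpow_two, enorm_eq_nnnorm]
  rw [variance, hev, hlp, ← ENNReal.toReal_rpow, ← Real.rpow_natCast _ 2,
    ← Real.rpow_mul ENNReal.toReal_nonneg]
  norm_num

lemma aux_sqrt_var {f : Ω → ℝ} (hf : MemLp f 2 P) (hmean : ∫ ω, f ω ∂P = 0) :
    Real.sqrt (variance f P) = (eLpNorm f 2 P).toReal := by
  rw [aux_var_eq_sq hf hmean, Real.sqrt_sq ENNReal.toReal_nonneg]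

lemma aux_tri {f g : Ω → ℝ} (hf : MemLp f 2 P) (hg : MemLp g 2 P) :
    (eLpNorm f 2 P).toReal ≤ (eLpNorm (f - g) 2 P).toReal + (eLpNorm g 2 P).toReal := by
  have h : eLpNorm f 2 P ≤ eLpNorm (f - g) 2 P + eLpNorm g 2 P := by
    have h2 := eLpNorm_add_le (hf.sub hg).aestronglyMeasurable hg.aestronglyMeasurable
      (one_le_two (α := ℝ≥0∞))
    rwa [sub_add_cancel] at h2
  calc (eLpNorm f 2 P).toReal
      ≤ ((eLpNorm (f - g) 2 P) + eLpNorm g 2 P).toReal :=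
        ENNReal.toReal_mono (ENNReal.add_ne_top.mpr ⟨(hf.sub hg).eLpNorm_ne_top,
          hg.eLpNorm_ne_top⟩) h
    _ = _ := ENNReal.toReal_add (hf.sub hg).eLpNorm_ne_top hg.eLpNorm_ne_top

/-- two-sided triangle comparison through a common approximant `g`. -/
lemma aux_tri2 {f h g : Ω → ℝ} (hf : MemLp f 2 P) (hh : MemLp h 2 P) (hg : MemLp g 2 P) :
    |(eLpNorm f 2 P).toReal - (eLpNorm h 2 P).toReal|
      ≤ (eLpNorm (f - g) 2 P).toReal + (eLpNorm (h - g) 2 P).toReal := by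
  have key : ∀ (a b : Ω → ℝ), MemLp a 2 P → MemLp b 2 P →
      (eLpNorm a 2 P).toReal - (eLpNorm b 2 P).toReal
        ≤ (eLpNorm (a - g) 2 P).toReal + (eLpNorm (b - g) 2 P).toReal := by
    intro a b ha hb
    have t1 := aux_tri (g := g) ha hg
    have t2 := aux_tri (g := b) hg hb
    have e : eLpNorm (g - b) 2 P = eLpNorm (b - g) 2 P := by
      rw [← eLpNorm_neg, neg_sub]
    rw [e] at t2
    linarith
  rw [abs_sub_le_iff]
  constructor
  · exact key f h hf hh
  · have := key h f hh hf
    linarith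

lemma aux_LP {f g : Ω → ℝ} (hfm : Measurable f) (hgm : Measurable g)
    (hf : MemLp f 2 P) (hg : MemLp g 2 P)
    (hfmean : ∫ ω, f ω ∂P = 0) (hgmean : ∫ ω, g ω ∂P = 0)
    {δ : ℝ} (hδ : 0 ≤ δ) (hvar : variance (fun ω => f ω - g ω) P ≤ δ^3) :
    levyProkhorovDist (P.map g) (P.map f) ≤ δ := by
  have h1 : IsProbabilityMeasure (P.map g) := Measure.isProbabilityMeasure_map hgm.aemeasurable
  have h2 : IsProbabilityMeasure (P.map f) := Measure.isProbabilityMeasure_map hfm.aemeasurable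
  apply levyProkhorovDist_le_of_forall_le _ _ hδ
  intro ε B hε hB
  have hεpos : 0 < ε := lt_of_le_of_lt hδ hε
  have hD : MemLp (fun ω => f ω - g ω) 2 P := hf.sub hg
  have hDmean : ∫ ω, (f ω - g ω) ∂P = 0 := by
    rw [integral_sub (hf.integrable one_le_two) (hg.integrable one_le_two), hfmean, hgmean,
      sub_zero]
  rw [Measure.map_apply hgm hB, Measure.map_apply hfm isOpen_thickening.measurableSet]
  have hsub : g ⁻¹' B ⊆ f ⁻¹' (thickening ε B) ∪
      {ω | ε ≤ |(fun ω => f ω - g ω) ω - ∫ ω', (f ω' - g ω') ∂P|} := by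
    intro ω hω
    by_cases hc : |f ω - g ω| < ε
    · left
      rw [Set.mem_preimage, mem_thickening_iff]
      exact ⟨g ω, hω, by rwa [Real.dist_eq]⟩
    · right
      simp only [hDmean, sub_zero, Set.mem_setOf_eq]
      exact le_of_not_gt hc
  calc P (g ⁻¹' B)
      ≤ P (f ⁻¹' thickening ε B) +
        P {ω | ε ≤ |(fun ω => f ω - g ω) ω - ∫ ω', (f ω' - g ω') ∂P|} :=
        (measure_mono hsub).trans (measure_union_le _ _)
    _ ≤ P (f ⁻¹' thickening ε B) + ENNReal.ofReal ε := by
        gcongr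
        refine (meas_ge_le_variance_div_sq hD hεpos).trans ?_
        apply ENNReal.ofReal_le_ofReal
        rw [div_le_iff₀ (by positivity)]
        calc variance (fun ω => f ω - g ω) P ≤ δ^3 := hvar
          _ ≤ ε^3 := by gcongr
          _ = ε * ε^2 := by ring

lemma aux_gauss_int (v : ℝ≥0) (g : BoundedContinuousFunction ℝ ℝ) :
    ∫ x, g x ∂(gaussianReal 0 v) = ∫ x, g (Real.sqrt v * x) ∂(gaussianReal 0 1) := by
  have hmap : (gaussianReal 0 1).map (fun x => Real.sqrt v * x) = gaussianReal 0 v := by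
    rw [show (fun x => Real.sqrt (v : ℝ) * x) = ((Real.sqrt v : ℝ) * ·) from rfl,
      gaussianReal_map_const_mul]
    have hv : NNReal.mk (Real.sqrt v ^ 2) (sq_nonneg _) * 1 = v := by
      ext
      simp [Real.sq_sqrt v.coe_nonneg]
    rw [hv, mul_zero]
  rw [← hmap, integral_map (by fun_prop) g.continuous.aestronglyMeasurable]

lemma aux_gauss_tendsto {σk2 : ℕ → ℝ} (hσk2 : ∀ k, 0 ≤ σk2 k) {σ2 : ℝ} (hσ2 : 0 ≤ σ2)
    (hlim : Tendsto σk2 atTop (nhds σ2)) (g : BoundedContinuousFunction ℝ ℝ) :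
    Tendsto (fun k => ∫ x, g x ∂(gaussianReal 0 ⟨σk2 k, hσk2 k⟩)) atTop
      (nhds (∫ x, g x ∂(gaussianReal 0 ⟨σ2, hσ2⟩))) := by
  rw [show (fun k => ∫ x, g x ∂(gaussianReal 0 ⟨σk2 k, hσk2 k⟩)) = (fun k => ∫ x, g (Real.sqrt (σk2 k) * x) ∂(gaussianReal 0 1)) from funext fun k => aux_gauss_int _ g, aux_gauss_int ⟨σ2, hσ2⟩ g]
  apply tendsto_integral_of_dominated_convergence (fun _ => ‖g‖)
  · exact fun k => (g.continuous.comp (continuous_const.mul continuous_id)).aestronglyMeasurable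
  · exact integrable_const _
  · exact fun k => Eventually.of_forall fun x => g.norm_coe_le_norm _
  · refine Eventually.of_forall fun x => ?_
    have h : Tendsto (fun k => Real.sqrt (σk2 k) * x) atTop
        (nhds (Real.sqrt σ2 * x)) :=
      ((Real.continuous_sqrt.tendsto _).comp hlim).mul_const x
    exact ((g.continuous.tendsto _).comp h)

end Aux

/-- Lemma 2.2 of the paper (convergence in distribution part): if for each `k`,
`X n k` converges in distribution to `N(0, σk²)` with convergence of variances,
and `lim_k limsup_n Var[X n k - Y n] = 0`, then `σ² = lim_k σk²` exists and
`Y n` converges in distribution to `N(0, σ²)`. -/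
theorem stmt_2
    (Ω : Type) [MeasurableSpace Ω] (P : Measure Ω) [IsProbabilityMeasure P]
    (Y : ℕ → Ω → ℝ) (X : ℕ → ℕ → Ω → ℝ)
    (hYmeas : ∀ n, Measurable (Y n)) (hXmeas : ∀ n k, Measurable (X n k))
    (hYL2 : ∀ n, MemLp (Y n) 2 P) (hXL2 : ∀ n k, MemLp (X n k) 2 P)
    (hYmean : ∀ n, ∫ ω, Y n ω ∂P = 0) (hXmean : ∀ n k, ∫ ω, X n k ω ∂P = 0)
    (σk2 : ℕ → ℝ) (hσk2 : ∀ k, 0 ≤ σk2 k)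
    (hdist : ∀ k, ∀ g : BoundedContinuousFunction ℝ ℝ,
      Tendsto (fun n : ℕ => ∫ ω, g (X n k ω) ∂P) atTop
        (nhds (∫ x, g x ∂(gaussianReal 0 ⟨σk2 k, hσk2 k⟩))))
    (hvar : ∀ k, Tendsto (fun n : ℕ => variance (X n k) P) atTop (nhds (σk2 k)))
    (happrox : ∀ ε : ℝ, 0 < ε → ∃ K : ℕ, ∀ k ≥ K,
      ∀ᶠ n in atTop, variance (fun ω => X n k ω - Y n ω) P ≤ ε) :
    ∃ σ2 : ℝ, ∃ hσ2 : 0 ≤ σ2, Tendsto σk2 atTop (nhds σ2) ∧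
      ∀ g : BoundedContinuousFunction ℝ ℝ,
        Tendsto (fun n : ℕ => ∫ ω, g (Y n ω) ∂P) atTop
          (nhds (∫ x, g x ∂(gaussianReal 0 ⟨σ2, hσ2⟩))) := by
  classical
  -- notation for L² norms
  set N : (Ω → ℝ) → ℝ := fun f => (eLpNorm f 2 P).toReal with hNdef
  set s : ℕ → ℝ := fun k => Real.sqrt (σk2 k) with hsdef
  -- difference variables are mean zero and in L²
  have hDL2 : ∀ n k, MemLp (fun ω => X n k ω - Y n ω) 2 P := fun n k => (hXL2 n k).sub (hYL2 n)
  have hDmean : ∀ n k, ∫ ω, (X n k ω - Y n ω) ∂P = 0 := fun n k => by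
    rw [integral_sub ((hXL2 n k).integrable one_le_two) ((hYL2 n).integrable one_le_two),
      hXmean, hYmean, sub_zero]
  -- √variance → s k
  have hsl : ∀ k, Tendsto (fun n => Real.sqrt (variance (X n k) P)) atTop (nhds (s k)) :=
    fun k => (Real.continuous_sqrt.tendsto _).comp (hvar k)
  -- s is Cauchy
  have hcauchy : CauchySeq s := by
    rw [Metric.cauchySeq_iff']
    intro ε hε
    obtain ⟨K, hK⟩ := happrox ((ε/4)^2) (by positivity)
    refine ⟨K, fun k hk => ?_⟩
    have h3 : ∀ᶠ n in atTop, |Real.sqrt (variance (X n k) P) - s k| < ε/8 := by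
      have := Metric.tendsto_atTop.mp (hsl k) (ε/8) (by positivity)
      obtain ⟨Nn, hNn⟩ := this
      exact eventually_atTop.mpr ⟨Nn, fun n hn => by simpa [Real.dist_eq] using hNn n hn⟩
    have h4 : ∀ᶠ n in atTop, |Real.sqrt (variance (X n K) P) - s K| < ε/8 := by
      have := Metric.tendsto_atTop.mp (hsl K) (ε/8) (by positivity)
      obtain ⟨Nn, hNn⟩ := this
      exact eventually_atTop.mpr ⟨Nn, fun n hn => by simpa [Real.dist_eq] using hNn n hn⟩
    obtain ⟨n, h1n, h2n, h3n, h4n⟩ := ((hK k hk).and ((hK K le_rfl).and (h3.and h4))).exists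
    -- bound the middle term at time n
    have hmid : |Real.sqrt (variance (X n k) P) - Real.sqrt (variance (X n K) P)| ≤ ε/2 := by
      have e1 : Real.sqrt (variance (X n k) P) = N (X n k) :=
        aux_sqrt_var (hXL2 n k) (hXmean n k)
      have e2 : Real.sqrt (variance (X n K) P) = N (X n K) :=
        aux_sqrt_var (hXL2 n K) (hXmean n K)
      have t := aux_tri2 (g := Y n) (hXL2 n k) (hXL2 n K) (hYL2 n)
      have ed1 : N (X n k - Y n) = Real.sqrt (variance (fun ω => X n k ω - Y n ω) P) :=
        (aux_sqrt_var (hDL2 n k) (hDmean n k)).symm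
      have ed2 : N (X n K - Y n) = Real.sqrt (variance (fun ω => X n K ω - Y n ω) P) :=
        (aux_sqrt_var (hDL2 n K) (hDmean n K)).symm
      have b1 : Real.sqrt (variance (fun ω => X n k ω - Y n ω) P) ≤ ε/4 := by
        rw [show (ε/4 : ℝ) = Real.sqrt ((ε/4)^2) from (Real.sqrt_sq (by positivity)).symm]
        exact Real.sqrt_le_sqrt h1n
      have b2 : Real.sqrt (variance (fun ω => X n K ω - Y n ω) P) ≤ ε/4 := by
        rw [show (ε/4 : ℝ) = Real.sqrt ((ε/4)^2) from (Real.sqrt_sq (by positivity)).symm]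
        exact Real.sqrt_le_sqrt h2n
      rw [e1, e2]
      calc |N (X n k) - N (X n K)| ≤ N (X n k - Y n) + N (X n K - Y n) := t
        _ ≤ ε/4 + ε/4 := by rw [ed1, ed2]; exact add_le_add b1 b2
        _ = ε/2 := by ring
    have : |s k - s K| < ε := by
      rw [abs_sub_comm] at h3n
      have habs : |s k - s K| ≤ |s k - Real.sqrt (variance (X n k) P)|
          + (|Real.sqrt (variance (X n k) P) - Real.sqrt (variance (X n K) P)|
          + |Real.sqrt (variance (X n K) P) - s K|) := by
        calc |s k - s K| ≤ |s k - Real.sqrt (variance (X n k) P)|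
            + |Real.sqrt (variance (X n k) P) - s K| := abs_sub_le _ _ _
          _ ≤ _ := by gcongr; exact abs_sub_le _ _ _
      linarith
    simpa [Real.dist_eq] using this
  obtain ⟨L, hL⟩ := cauchySeq_tendsto_of_complete hcauchy
  have hσ2 : (0:ℝ) ≤ L * L := mul_self_nonneg L
  have hlim : Tendsto σk2 atTop (nhds (L * L)) := by
    have h := hL.mul hL
    have e : (fun k => s k * s k) = σk2 := by
      funext k
      exact Real.mul_self_sqrt (hσk2 k)
    rwa [e] at h
  refine ⟨L * L, hσ2, hlim, ?_⟩
  -- Part 2: convergence in distribution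
  set ν : ProbabilityMeasure ℝ := ⟨gaussianReal 0 ⟨L * L, hσ2⟩, instIsProbabilityMeasureGaussianReal _ _⟩ with hν
  set νs : ℕ → ProbabilityMeasure ℝ :=
    fun k => ⟨gaussianReal 0 ⟨σk2 k, hσk2 k⟩, instIsProbabilityMeasureGaussianReal _ _⟩ with hνs
  set μ : ℕ → ProbabilityMeasure ℝ :=
    fun n => ⟨P.map (Y n), Measure.isProbabilityMeasure_map (hYmeas n).aemeasurable⟩ with hμ
  set μ' : ℕ → ℕ → ProbabilityMeasure ℝ :=
    fun n k => ⟨P.map (X n k), Measure.isProbabilityMeasure_map (hXmeas n k).aemeasurable⟩ with hμ'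
  set T := LevyProkhorov.probabilityMeasureHomeomorph (Ω := ℝ) with hT
  -- convergence in distribution of X · k, in LP metric
  have h1 : ∀ k, Tendsto (fun n => T (μ' n k)) atTop (nhds (T (νs k))) := by
    intro k
    apply (T.continuous.tendsto _).comp
    rw [ProbabilityMeasure.tendsto_iff_forall_integral_tendsto]
    intro g
    have e : ∀ n, ∫ x, g x ∂((μ' n k) : Measure ℝ) = ∫ ω, g (X n k ω) ∂P := fun n =>
      integral_map (hXmeas n k).aemeasurable g.continuous.aestronglyMeasurable
    simp only [hμ', hνs] at e ⊢
    simp only [e]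
    exact hdist k g
  -- convergence of the gaussians, in LP metric
  have h2 : Tendsto (fun k => T (νs k)) atTop (nhds (T ν)) := by
    apply (T.continuous.tendsto _).comp
    rw [ProbabilityMeasure.tendsto_iff_forall_integral_tendsto]
    intro g
    exact aux_gauss_tendsto hσk2 hσ2 hlim g
  -- main convergence in LP metric
  have hmain : Tendsto (fun n => T (μ n)) atTop (nhds (T ν)) := by
    rw [Metric.tendsto_atTop]
    intro ε hε
    obtain ⟨K, hK⟩ := happrox ((ε/4)^3) (by positivity)
    obtain ⟨K2, hK2⟩ := Metric.tendsto_atTop.mp h2 (ε/4) (by positivity)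
    set k := max K K2 with hk
    have hA : ∀ᶠ n in atTop, variance (fun ω => X n k ω - Y n ω) P ≤ (ε/4)^3 :=
      hK k (le_max_left _ _)
    have hB : ∀ᶠ n in atTop, dist (T (μ' n k)) (T (νs k)) < ε/4 := by
      obtain ⟨Nn, hNn⟩ := Metric.tendsto_atTop.mp (h1 k) (ε/4) (by positivity)
      exact eventually_atTop.mpr ⟨Nn, hNn⟩
    obtain ⟨Nn, hNn⟩ := eventually_atTop.mp (hA.and hB)
    refine ⟨Nn, fun n hn => ?_⟩
    obtain ⟨hAn, hBn⟩ := hNn n hn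
    have hd1 : dist (T (μ n)) (T (μ' n k)) ≤ ε/4 := by
      have := aux_LP (hXmeas n k) (hYmeas n) (hXL2 n k) (hYL2 n) (hXmean n k) (hYmean n)
        (le_of_lt (by positivity : (0:ℝ) < ε/4)) hAn
      exact this
    have hd3 : dist (T (νs k)) (T ν) < ε/4 := hK2 k (le_max_right _ _)
    have htri := dist_triangle4 (T (μ n)) (T (μ' n k)) (T (νs k)) (T ν)
    linarith
  -- transfer back to convergence in distribution
  have hfinal : Tendsto μ atTop (nhds ν) := by
    have := (T.symm.continuous.tendsto _).comp hmain
    simpa [Function.comp_def] using this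
  rw [ProbabilityMeasure.tendsto_iff_forall_integral_tendsto] at hfinal
  intro g
  have e : ∀ n, ∫ x, g x ∂((μ n) : Measure ℝ) = ∫ ω, g (Y n ω) ∂P := fun n =>
    integral_map (hYmeas n).aemeasurable g.continuous.aestronglyMeasurable
  have := hfinal g
  simp only [e] at this
  exact this
end
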